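/- Let a, b, c, d be real quaternions with det_ℍ([[a,b],[c,d]]) ≠ 0. Then (a·q + b)·(c·q + d)⁻¹ = q for every q ∈ ℍ with c·q + d ≠ 0 if and only if b = 0, c = 0, a = d, and a is a nonzero real number (i.e. the matrix is a nonzero real multiple of the identity). -/

import Mathlib

set_option maxHeartbeats 1000000

open scoped Quaternion

/-- The Dieudonné determinant of a 2×2 quaternionic matrix. -/
noncomputable def detH (A : Matrix (Fin 2) (Fin 2) ℍ[ℝ]) : ℝ :=
  Real.sqrt (‖A 0 0‖ ^ 2 * ‖A 1 1‖ ^ 2 + ‖A 1 0‖ ^ 2 * ‖A 0 1‖ ^ 2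
    - 2 * (A 1 0 * star (A 0 0) * A 0 1 * star (A 1 1)).re)

/-- A quaternionic fractional linear transformation is the identity map if and only if
its matrix is a nonzero real multiple of the identity. -/
theorem flt_eq_id_iff (a b c d : ℍ[ℝ]) (h : detH !![a, b; c, d] ≠ 0) :
    (∀ q : ℍ[ℝ], c * q + d ≠ 0 → (a * q + b) * (c * q + d)⁻¹ = q) ↔
      (b = 0 ∧ c = 0 ∧ a = d ∧ ∃ r : ℝ, r ≠ 0 ∧ a = (r : ℍ[ℝ])) := by
  constructor
  · intro H
    -- first, multiply out
    have key : ∀ q : ℍ[ℝ], c * q + d ≠ 0 → a * q + b = q * (c * q + d) := by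
      intro q hq
      have := H q hq
      rwa [mul_inv_eq_iff_eq_mul₀ hq] at this
    -- extend by continuity to all q
    have hall : ∀ q : ℍ[ℝ], a * q + b = q * (c * q + d) := by
      by_cases hc : c = 0
      · -- then d ≠ 0, since otherwise det = 0
        have hd : d ≠ 0 := by
          intro hd
          apply h
          simp [detH, hc, hd]
        intro q
        exact key q (by simp [hc, hd])
      · -- the bad set is a single point, whose complement is dense
        have hcont : Continuous fun q : ℍ[ℝ] => a * q + b - q * (c * q + d) := by
          continuity
        have hclosed : IsClosed {q : ℍ[ℝ] | a * q + b - q * (c * q + d) = 0} :=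
          isClosed_eq hcont continuous_const
        haveI : Filter.NeBot (nhdsWithin (c⁻¹ * (-d)) {(c⁻¹ * (-d))}ᶜ) :=
          Module.punctured_nhds_neBot ℝ ℍ[ℝ] _
        have hdense : Dense ({(c⁻¹ * (-d))}ᶜ : Set ℍ[ℝ]) := dense_compl_singleton _
        have hsub : ({(c⁻¹ * (-d))}ᶜ : Set ℍ[ℝ]) ⊆
            {q : ℍ[ℝ] | a * q + b - q * (c * q + d) = 0} := by
          intro q hq
          have hq' : c * q + d ≠ 0 := by
            intro hq'
            apply hq
            have hcq : c * q = -d := eq_neg_of_add_eq_zero_left hq'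
            simp only [Set.mem_singleton_iff]
            rw [← hcq, ← mul_assoc, inv_mul_cancel₀ hc, one_mul]
          exact sub_eq_zero.mpr (key q hq')
        have : {q : ℍ[ℝ] | a * q + b - q * (c * q + d) = 0} = Set.univ := by
          have := (hdense.mono hsub).closure_eq
          rwa [hclosed.closure_eq] at this
        intro q
        have hq : q ∈ {q : ℍ[ℝ] | a * q + b - q * (c * q + d) = 0} := this ▸ Set.mem_univ q
        exact sub_eq_zero.mp hq
    have hb : b = 0 := by have := hall 0; simpa using this
    have h1 : a = c + d := by have := hall 1; simpa [hb] using this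
    have h2 : a = -c + d := by
      have e := hall (-1)
      rw [hb, add_zero, mul_neg_one, mul_neg_one, neg_one_mul] at e
      exact neg_injective e
    have hc : c = 0 := by
      have e : c + d = -c + d := h1.symm.trans h2
      have e2 : c = -c := by
        have := add_right_cancel e
        exact this
      have hcc : c + c = 0 := by nth_rewrite 2 [e2]; simp
      have h2c : (2 : ℝ) • c = 0 := by rw [two_smul]; exact hcc
      simpa using (smul_eq_zero.mp h2c).resolve_left (by norm_num)
    have had : a = d := by rw [h1, hc, zero_add]
    have hcomm : ∀ q : ℍ[ℝ], a * q = q * a := by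
      intro q
      have := hall q
      rw [hb, hc, ← had] at this
      simpa using this
    have ha0 : a ≠ 0 := by
      intro ha
      apply h
      simp [detH, hc, ← had, ha]
    have hi := hcomm ⟨0, 1, 0, 0⟩
    have hj := hcomm ⟨0, 0, 1, 0⟩
    rw [Quaternion.ext_iff] at hi hj
    obtain ⟨hi1, hi2, hi3, hi4⟩ := hi
    obtain ⟨hj1, hj2, hj3, hj4⟩ := hj
    erw [Quaternion.re_mul, Quaternion.re_mul] at hi1 hj1
    erw [Quaternion.imI_mul, Quaternion.imI_mul] at hi2 hj2
    erw [Quaternion.imJ_mul, Quaternion.imJ_mul] at hi3 hj3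
    erw [Quaternion.imK_mul, Quaternion.imK_mul] at hi4 hj4
    simp [QuaternionAlgebra.re_mul, QuaternionAlgebra.imI_mul, QuaternionAlgebra.imJ_mul,
      QuaternionAlgebra.imK_mul] at hi1 hi2 hi3 hi4 hj1 hj2 hj3 hj4
    have hImI : a.imI = 0 := by linarith
    have hImJ : a.imJ = 0 := by linarith
    have hImK : a.imK = 0 := by linarith
    have hae : a = ((a.re : ℝ) : ℍ[ℝ]) := by
      ext <;> simp [hImI, hImJ, hImK]
    refine ⟨hb, hc, had, a.re, ?_, hae⟩
    intro hre
    apply ha0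
    rw [hae, hre]
    simp
  · rintro ⟨hb, hc, had, r, hr, ha⟩
    intro q hq
    rw [hb, hc, ← had, ha]
    simp only [zero_mul, zero_add, add_zero]
    rw [mul_inv_eq_iff_eq_mul₀ (by rwa [hc, zero_mul, zero_add, ← had, ha] at hq)]
    rw [← Quaternion.coe_commutes]
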